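/- arXiv:1607.04459 — 2 statements merged into one kernel-verified Lean document; each statement's English description precedes it below -/
import Mathlib

section
/- For every labeled tree t and every choice of processing orders of the children at the nodes, the stack requirement satisfies S(t) ≥ dim(t) + 1. -/
/-- A labeled tree: a node carries a label and a (possibly empty) list of children. -/
inductive LTree (L : Type) : Type where
  | node : L → List (LTree L) → LTree L

namespace LTree

/-- The tree dimension: `0` for a leaf; otherwise the maximum `m` of the children's
dimensions if exactly one child attains `m`, and `m + 1` otherwise. -/
def dim {L : Type} : LTree L → ℕ
  | node _ ts =>
    let ds := ts.attach.map fun x => dim x.1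
    if ds = [] then 0
    else
      let m := ds.foldr max 0
      if ds.count m = 1 then m else m + 1
termination_by t => sizeOf t
decreasing_by
  have := List.sizeOf_lt_of_mem x.2
  simp_wf
  omega

/-- The stack requirement of a tree whose children are processed left-to-right
(i.e. the processing order at each node is the order of the children list):
`S(t) = 1` for a leaf, and `S(t) = max_{1 ≤ j ≤ r} (S(t_j) + (r − j))` otherwise
(here realised with 0-based indices, so the summand is `r - 1 - j`). -/
def stackReq {L : Type} : LTree L → ℕ
  | node _ ts =>
    if ts.isEmpty then 1
    else (ts.attach.zipIdx.map fun p => stackReq p.1.1 + (ts.length - 1 - p.2)).foldr max 0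
termination_by t => sizeOf t
decreasing_by
  have := List.sizeOf_lt_of_mem p.1.2
  simp_wf
  omega

/-- `Reorder t t'` : the tree `t'` arises from `t` by choosing, at every node of `t`,
a processing order of the children (a permutation) and listing the children in that
order.  The stack requirement of `t` under such a choice of processing orders is
exactly `stackReq t'`. -/
inductive Reorder {L : Type} : LTree L → LTree L → Prop
  | node (c : L) (ts us vs : List (LTree L)) :
      List.Forall₂ Reorder ts us → us.Perm vs → Reorder (node c ts) (node c vs)



theorem foldr_max_perm {l₁ l₂ : List ℕ} (h : l₁.Perm l₂) :
    l₁.foldr max 0 = l₂.foldr max 0 := by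
  induction h with
  | nil => rfl
  | cons x _ ih => simp [ih]
  | swap x y l => simp [max_left_comm, max_comm]
  | trans _ _ ih1 ih2 => omega

theorem foldr_max_mem {l : List ℕ} (h : l ≠ []) : l.foldr max 0 ∈ l := by
  induction l with
  | nil => simp at h
  | cons a l ih =>
    rcases eq_or_ne l [] with rfl | hl
    · simp
    · rcases le_total a (l.foldr max 0) with h' | h'
      · simp [max_eq_right h', ih hl]
      · simp [max_eq_left h']

theorem le_foldr_max {l : List ℕ} {a : ℕ} (h : a ∈ l) : a ≤ l.foldr max 0 := by
  induction l with
  | nil => simp at h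
  | cons b l ih =>
    rcases List.mem_cons.1 h with rfl | h'
    · simp
    · simp only [List.foldr_cons, le_max_iff]
      exact Or.inr (ih h')

theorem dim_node {L : Type} (c : L) (ts : List (LTree L)) :
    dim (node c ts) =
      if ts.map dim = [] then 0
      else
        let m := (ts.map dim).foldr max 0
        if (ts.map dim).count m = 1 then m else m + 1 := by
  rw [dim]
  rw [List.attach_map_val]

theorem stackReq_node {L : Type} (c : L) (ts : List (LTree L)) :
    stackReq (node c ts) =
      if ts.isEmpty then 1
      else (ts.attach.zipIdx.map fun p => stackReq p.1.1 + (ts.length - 1 - p.2)).foldr max 0 := by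
  rw [stackReq]

theorem le_stackReq_node {L : Type} (c : L) (ts : List (LTree L)) (j : ℕ)
    (hj : j < ts.length) :
    stackReq ts[j] + (ts.length - 1 - j) ≤ stackReq (node c ts) := by
  rw [stackReq_node]
  have hne : ¬ ts.isEmpty := by
    simp [List.isEmpty_iff]
    rintro rfl; simp at hj
  rw [if_neg hne]
  apply le_foldr_max
  have hj' : j < ts.attach.length := by simpa using hj
  refine List.mem_map.2 ⟨(ts.attach[j], j), ?_, ?_⟩
  · rw [List.mem_zipIdx_iff_getElem?]
    exact List.getElem?_eq_getElem hj'
  · simp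

theorem stack_ge {L : Type} : ∀ t : LTree L, dim t + 1 ≤ stackReq t
  | node c ts => by
    have ih : ∀ a ∈ ts, dim a + 1 ≤ stackReq a := fun a ha => stack_ge a
    rcases eq_or_ne ts [] with rfl | hne
    · rw [dim_node, stackReq_node]; simp
    · have hds : ts.map dim ≠ [] := by simpa using hne
      set ds := ts.map dim with hdsdef
      set m := ds.foldr max 0 with hmdef
      have hmem : m ∈ ds := foldr_max_mem hds
      rw [dim_node, if_neg hds]
      by_cases hc : ds.count m = 1
      · rw [if_pos hc]
        obtain ⟨a, ha, hda⟩ := List.mem_map.1 hmem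
        obtain ⟨j, hj, rfl⟩ := List.mem_iff_getElem.1 ha
        calc m + 1 ≤ stackReq ts[j] := by rw [← hda]; exact ih _ (List.getElem_mem hj)
          _ ≤ stackReq ts[j] + (ts.length - 1 - j) := Nat.le_add_right _ _
          _ ≤ stackReq (node c ts) := le_stackReq_node c ts j hj
      · rw [if_neg hc]
        -- count ≥ 2, so m occurs in ds.dropLast
        have hcount2 : 2 ≤ ds.count m := by
          have := List.count_pos_iff.2 hmem
          omega
        have hsplit : ds = ds.dropLast ++ [ds.getLast hds] := (List.dropLast_append_getLast hds).symm
        have hmemdl : m ∈ ds.dropLast := by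
          rw [List.count_pos_iff.symm] -- might not exist; adjust
          have : ds.count m = ds.dropLast.count m + [ds.getLast hds].count m := by
            conv_lhs => rw [hsplit]
            rw [List.count_append]
          have h1 : [ds.getLast hds].count m ≤ 1 := by
            simp [List.count_singleton]; split <;> omega
          omega
        obtain ⟨j, hj, hjv⟩ := List.mem_iff_getElem.1 hmemdl
        have hjlen : j < ts.length - 1 := by
          simpa [hdsdef] using hj
        have hjlen' : j < ts.length := by omega
        have hdj : dim ts[j] = m := by
          have : ds.dropLast[j] = ds[j]'(by simp [hdsdef]; omega) := List.getElem_dropLast hj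
          rw [this] at hjv
          simpa [hdsdef] using hjv
        calc m + 1 + 1 ≤ stackReq ts[j] + (ts.length - 1 - j) := by
              have h1 : dim ts[j] + 1 ≤ stackReq ts[j] := ih _ (List.getElem_mem hjlen')
              have h2 : 1 ≤ ts.length - 1 - j := by omega
              omega
          _ ≤ stackReq (node c ts) := le_stackReq_node c ts j hjlen'
termination_by t => sizeOf t
decreasing_by
  have := List.sizeOf_lt_of_mem ha
  simp_wf
  omega

theorem forall2_map_dim {L : Type} : ∀ {ts us : List (LTree L)},
    List.Forall₂ Reorder ts us →
    (∀ a ∈ ts, ∀ b, Reorder a b → dim a = dim b) →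
    ts.map dim = us.map dim := by
  intro ts us h
  induction h with
  | nil => intro; rfl
  | cons hab h ih =>
    intro hd
    simp only [List.map_cons]
    rw [hd _ (by simp) _ hab, ih (fun a ha b hb => hd a (by simp [ha]) b hb)]

theorem dim_eq {L : Type} : ∀ (t t' : LTree L), Reorder t t' → dim t = dim t'
  | node c ts, t', h => by
    have ih : ∀ a ∈ ts, ∀ b, Reorder a b → dim a = dim b :=
      fun a ha b hb => dim_eq a b hb
    cases h with
    | node _ _ us vs h1 h2 =>
      have hmap : ts.map dim = us.map dim := forall2_map_dim h1 ih
      have hperm : (ts.map dim).Perm (vs.map dim) := by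
        rw [hmap]; exact h2.map dim
      rw [dim_node, dim_node]
      have hnil : ts.map dim = [] ↔ vs.map dim = [] := by
        rw [← List.length_eq_zero_iff, ← List.length_eq_zero_iff, hperm.length_eq]
      rcases eq_or_ne (ts.map dim) [] with he | he
      · rw [if_pos he, if_pos (hnil.1 he)]
      · rw [if_neg he, if_neg (fun hx => he (hnil.2 hx))]
        have hmax : (ts.map dim).foldr max 0 = (vs.map dim).foldr max 0 :=
          foldr_max_perm hperm
        have hcnt : ∀ n, (ts.map dim).count n = (vs.map dim).count n :=
          fun n => hperm.count_eq n
        simp only [← hmax, ← hcnt]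
termination_by t => sizeOf t
decreasing_by
  have := List.sizeOf_lt_of_mem ha
  simp_wf
  omega


end LTree

/-- For every labeled tree `t` and every choice of processing orders of the children
at the nodes, the stack requirement satisfies `S(t) ≥ dim(t) + 1`. -/
theorem dim_lt_stackReq {L : Type} (t t' : LTree L) (h : LTree.Reorder t t') :
    t.dim + 1 ≤ t'.stackReq := by
  rw [LTree.dim_eq t t' h]
  exact LTree.stack_ge t'
end

section
/- Let Q be a ground Horn program in which every rule has at most i body atoms, where i ≥ 1. If an atom h has a derivation tree in Q of dimension at most k, then there is a sequence of steps of the goal-stack machine for Q from the state [h] to the empty state [] in which every intermediate state has length at most (i − 1)·k + 1. -/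
/-- A ground atom: a predicate symbol together with an argument tuple. -/
abbrev GAtom (P A : Type) := P × A

/-- A ground Horn rule: a head atom together with a finite list of body atoms. -/
abbrev GRule (P A : Type) := GAtom P A × List (GAtom P A)

/-- `IsDeriv Q h T` : `T` is a derivation tree for the atom `h` in `Q`: its root label
is a rule `(h, [b₁,…,b_r]) ∈ Q` and its `r` children are derivation trees for
`b₁,…,b_r` in `Q`, respectively. -/
inductive IsDeriv {P A : Type} (Q : Set (GRule P A)) :
    GAtom P A → LTree (GRule P A) → Prop
  | node (r : GRule P A) (ts : List (LTree (GRule P A))) :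
      r ∈ Q → List.Forall₂ (IsDeriv Q) r.2 ts → IsDeriv Q r.1 (.node r ts)

/-- A step of the goal-stack machine for `Q`: from a state `h :: G`, for any rule
`(h, B) ∈ Q` and any permutation `B'` of `B`, it may step to the state `B' ++ G`. -/
inductive Step {P A : Type} (Q : Set (GRule P A)) :
    List (GAtom P A) → List (GAtom P A) → Prop
  | mk (h : GAtom P A) (G B B' : List (GAtom P A)) :
      (h, B) ∈ Q → B.Perm B' → Step Q (h :: G) (B' ++ G)

/-! ### Auxiliary machinery -/


theorem LTree.dim_node_s14 {L : Type} (l : L) (ts : List (LTree L)) :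
    LTree.dim (LTree.node l ts) =
      if ts.map LTree.dim = [] then 0
      else if (ts.map LTree.dim).count ((ts.map LTree.dim).foldr max 0) = 1
        then (ts.map LTree.dim).foldr max 0 else (ts.map LTree.dim).foldr max 0 + 1 := by
  rw [LTree.dim]
  rw [List.attach_map_val]

lemma le_foldr_max (l : List ℕ) : ∀ x ∈ l, x ≤ l.foldr max 0 := by
  induction l with
  | nil => simp
  | cons a l ih =>
    intro x hx
    rcases List.mem_cons.1 hx with rfl | hx
    · exact le_max_left _ _
    · exact le_trans (ih x hx) (le_max_right _ _)

lemma foldr_max_mem (l : List ℕ) (h : l ≠ []) : l.foldr max 0 ∈ l := by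
  induction l with
  | nil => simp at h
  | cons a l ih =>
    rcases eq_or_ne l [] with rfl | hl
    · simp
    · simp only [List.foldr_cons]
      rcases max_cases a (l.foldr max 0) with ⟨he, _⟩ | ⟨he, _⟩
      · rw [he]; exact List.mem_cons_self
      · rw [he]; exact List.mem_cons_of_mem _ (ih hl)

/-- `Reach St n s t` : there is a run of `St` from `s` to `t` all of whose states
have length at most `n`. -/
def Reach {α : Type} (St : List α → List α → Prop) (n : ℕ) (s t : List α) : Prop :=
  ∃ L : List (List α), L.Chain' St ∧ L.head? = some s ∧ L.getLast? = some t ∧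
    ∀ x ∈ L, x.length ≤ n

namespace Reach

variable {α : Type} {St : List α → List α → Prop} {n m : ℕ} {s t u : List α}

lemma refl (h : s.length ≤ n) : Reach St n s s :=
  ⟨[s], List.isChain_singleton _, by simp, by simp, by simpa⟩

lemma single (h : St s t) (hs : s.length ≤ n) (ht : t.length ≤ n) : Reach St n s t :=
  ⟨[s, t], List.isChain_pair.2 h, by simp, by simp, by simp [hs, ht]⟩

lemma trans (h1 : Reach St n s t) (h2 : Reach St n t u) : Reach St n s u := by
  obtain ⟨L1, hc1, hh1, hl1, hb1⟩ := h1
  obtain ⟨L2, hc2, hh2, hl2, hb2⟩ := h2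
  obtain ⟨L2', rfl⟩ : ∃ L2', L2 = t :: L2' := by
    cases L2 with
    | nil => simp at hh2
    | cons a L2' =>
      obtain rfl : a = t := by simpa using hh2
      exact ⟨L2', rfl⟩
  refine ⟨L1 ++ L2', ?_, ?_, ?_, ?_⟩
  · refine List.IsChain.append hc1 (List.isChain_cons.1 hc2).2 ?_
    intro x hx y hy
    rw [hl1] at hx
    obtain rfl : x = t := by simpa using hx.symm
    exact (List.isChain_cons.1 hc2).1 y hy
  · rw [List.head?_append_of_ne_nil]
    · exact hh1
    · intro h; subst h; simp at hh1
  · cases L2' with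
    | nil => simpa using hl1.trans (by simpa using hl2)
    | cons a L2'' =>
      rw [List.getLast?_append]
      rw [show (t :: a :: L2'').getLast? = ((a :: L2'').getLast?) by simp] at hl2
      simp [hl2]
  · intro x hx
    rcases List.mem_append.1 hx with hx | hx
    · exact hb1 x hx
    · exact hb2 x (List.mem_cons_of_mem _ hx)

lemma mono (hnm : n ≤ m) (h : Reach St n s t) : Reach St m s t := by
  obtain ⟨L, hc, hh, hl, hb⟩ := h
  exact ⟨L, hc, hh, hl, fun x hx => le_trans (hb x hx) hnm⟩

end Reach

section Seq

variable {P A : Type} (Q : Set (GRule P A)) (i : ℕ)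

/-- Sequential execution of a list of goals, each with its own derivation run. -/
lemma seq_run (l : List (GAtom P A × LTree (GRule P A))) :
    ∀ (G : List (GAtom P A)) (n : ℕ),
    (∀ p ∈ l, ∀ G' : List (GAtom P A),
        Reach (Step Q) ((i - 1) * p.2.dim + 1 + G'.length) (p.1 :: G') G') →
    (∀ (l₁ : List (GAtom P A × LTree (GRule P A))) (p) (l₂),
        l = l₁ ++ p :: l₂ → (i - 1) * p.2.dim + 1 + l₂.length + G.length ≤ n) →
    G.length ≤ n →
    Reach (Step Q) n (l.map Prod.fst ++ G) G := by
  induction l with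
  | nil => intro G n _ _ hG; exact Reach.refl hG
  | cons p l ih =>
    intro G n hrun hbnd hG
    have h0 : (i - 1) * p.2.dim + 1 + l.length + G.length ≤ n :=
      hbnd [] p l rfl
    have h1 : Reach (Step Q) n (p.1 :: (l.map Prod.fst ++ G)) (l.map Prod.fst ++ G) := by
      have := hrun p List.mem_cons_self (l.map Prod.fst ++ G)
      refine this.mono ?_
      simp only [List.length_append, List.length_map]
      omega
    have h2 : Reach (Step Q) n (l.map Prod.fst ++ G) G := by
      refine ih G n (fun q hq => hrun q (List.mem_cons_of_mem _ hq)) ?_ hG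
      intro l₁ q l₂ hsplit
      exact hbnd (p :: l₁) q l₂ (by rw [hsplit]; rfl)
    simpa using h1.trans h2

end Seq

/-- The core lemma: a derivation tree of `h` yields a bounded run from `h :: G` to `G`. -/
lemma main_run {P A : Type} (Q : Set (GRule P A)) (i : ℕ)
    (hQ : ∀ r ∈ Q, r.2.length ≤ i) :
    ∀ (N : ℕ) (T : LTree (GRule P A)), sizeOf T ≤ N → ∀ (h : GAtom P A), IsDeriv Q h T →
    ∀ (G : List (GAtom P A)),
      Reach (Step Q) ((i - 1) * T.dim + 1 + G.length) (h :: G) G := by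
  classical
  intro N
  induction N with
  | zero =>
    intro T hN
    exfalso
    cases T with
    | node r ts =>
      have : 1 ≤ sizeOf (LTree.node r ts) := by
        cases r; simp [LTree.node.sizeOf_spec]; omega
      omega
  | succ N ihN =>
    intro T hN h hd G
    obtain ⟨r, ts, hr, hF⟩ := hd
    -- basic facts
    have hrQ : (r.1, r.2) ∈ Q := by simpa using hr
    have hlen : r.2.length = ts.length := hF.length_eq
    have hsize : ∀ t ∈ ts, sizeOf t ≤ N := by
      intro t ht
      have h1 := List.sizeOf_lt_of_mem ht
      cases r with
      | mk a b =>
        simp only [LTree.node.sizeOf_spec] at hN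
        omega
    -- the list of (goal, tree) pairs
    set l : List (GAtom P A × LTree (GRule P A)) := r.2.zip ts with hl
    have hmapfst : l.map Prod.fst = r.2 := List.map_fst_zip (le_of_eq hlen)
    have hmapsnd : l.map Prod.snd = ts := List.map_snd_zip (ge_of_eq hlen)
    have hderiv : ∀ p ∈ l, IsDeriv Q p.1 p.2 := by
      intro p hp
      have := List.forall₂_iff_zip.1 hF
      exact this.2 (by rw [← Prod.mk.eta (p := p)] at hp; exact hp)
    have hllen : l.length = ts.length := by
      rw [← hmapsnd]; simp
    -- each pair admits a bounded run (by the outer induction)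
    have hrun : ∀ p ∈ l, ∀ G' : List (GAtom P A),
        Reach (Step Q) ((i - 1) * p.2.dim + 1 + G'.length) (p.1 :: G') G' := by
      intro p hp G'
      have hpsnd : p.2 ∈ ts := by
        rw [← hmapsnd]; exact List.mem_map_of_mem hp
      exact ihN p.2 (hsize _ hpsnd) p.1 (hderiv p hp) G'
    set d : ℕ := LTree.dim (LTree.node r ts) with hd
    set n : ℕ := (i - 1) * d + 1 + G.length with hn
    rcases eq_or_ne ts [] with rfl | hts
    · -- no children: single step to G
      have hB : r.2 = [] := List.length_eq_zero_iff.1 (by simpa using hlen)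
      have hd0 : d = 0 := by rw [hd, LTree.dim_node_s14]; simp
      have hstep : Step Q (r.1 :: G) G := by
        have := Step.mk (Q := Q) r.1 G r.2 [] hrQ (by rw [hB])
        simpa using this
      refine Reach.single hstep ?_ ?_ <;> simp [hn] <;> omega
    · -- children present
      have hdims : ts.map LTree.dim ≠ [] := by simpa using hts
      set dims : List ℕ := ts.map LTree.dim with hdimsdef
      set m : ℕ := dims.foldr max 0 with hm
      have hdval : d = if dims.count m = 1 then m else m + 1 := by
        rw [hd, LTree.dim_node_s14, if_neg hdims]
      have hmle : m ≤ d := by rw [hdval]; split <;> omega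
      have hdimle : ∀ p ∈ l, p.2.dim ≤ m := by
        intro p hp
        refine le_foldr_max dims _ ?_
        rw [hdimsdef, ← hmapsnd, List.map_map]
        exact List.mem_map_of_mem hp
      -- pick a pair whose tree attains the maximal dimension
      have hmmem : m ∈ dims := foldr_max_mem _ hdims
      obtain ⟨pm, hpm, hpmdim⟩ : ∃ p ∈ l, p.2.dim = m := by
        rw [hdimsdef, ← hmapsnd, List.map_map] at hmmem
        obtain ⟨p, hp, hpd⟩ := List.mem_map.1 hmmem
        exact ⟨p, hp, hpd⟩
      -- move it to the end
      obtain ⟨u₁, u₂, hu⟩ : ∃ u₁ u₂, l = u₁ ++ pm :: u₂ := List.append_of_mem hpm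
      set e : List (GAtom P A × LTree (GRule P A)) := u₁ ++ u₂ with he
      set l' : List (GAtom P A × LTree (GRule P A)) := e ++ [pm] with hl'
      have hperm : l.Perm l' := by
        rw [hl', hu, he]
        exact List.perm_middle.trans (List.perm_append_singleton _ _).symm
      have hl'len : l'.length = l.length := hperm.length_eq.symm
      have hBlen : l.length ≤ i := by
        have h2 := hQ _ hr
        rw [← hmapfst] at h2
        simpa using h2
      -- key bound for each decomposition of l'
      have hbnd : ∀ (l₁ : List (GAtom P A × LTree (GRule P A))) (p) (l₂),
          l' = l₁ ++ p :: l₂ → (i - 1) * p.2.dim + 1 + l₂.length + G.length ≤ n := by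
        intro l₁ p l₂ hsplit
        have hpmem : p ∈ l := hperm.mem_iff.2 (by rw [hsplit]; simp)
        have hpdim : p.2.dim ≤ m := hdimle p hpmem
        have hlens : l₁.length + 1 + l₂.length = l'.length := by
          rw [hsplit]; simp; omega
        rcases eq_or_ne l₂ [] with rfl | hl₂
        · -- p is the last element: p = pm, dim = m
          have : (i - 1) * p.2.dim ≤ (i - 1) * d :=
            Nat.mul_le_mul_left _ (le_trans hpdim hmle)
          simp only [List.length_nil, hn]; omega
        · -- p is not last: p ∈ l.erase pm
          obtain ⟨q, l₂', rfl⟩ : ∃ q l₂', l₂ = l₂' ++ [q] := by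
            rcases List.eq_nil_or_concat l₂ with rfl | ⟨l₂', q, rfl⟩
            · exact absurd rfl hl₂
            · exact ⟨q, l₂', by simp⟩
          have hpe : p ∈ e := by
            have h1 : (l₁ ++ p :: l₂') ++ [q] = e ++ [pm] := by
              rw [← hl', hsplit]; simp
            have h2 : l₁ ++ p :: l₂' = e := (List.append_inj' h1 rfl).1
            rw [← h2]; simp
          have hl₂i : l₂'.length + 1 ≤ i - 1 := by
            rw [hl'len] at hlens
            simp at hlens ⊢
            omega
          -- case analysis on the count of m
          rcases eq_or_ne (dims.count m) 1 with hcount | hcount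
          · -- unique maximum: erased elements have dimension < m
            have hdm : d = m := by rw [hdval, if_pos hcount]
            have hplt : p.2.dim < m := by
              have hpermdims : dims.Perm (pm.2.dim :: e.map (fun q => q.2.dim)) := by
                have hde : dims = l.map (fun q => q.2.dim) := by
                  rw [hdimsdef, ← hmapsnd, List.map_map]; rfl
                rw [hde, hu, he]
                simp only [List.map_append, List.map_cons]
                exact List.perm_middle
              have hcount2 : (pm.2.dim :: e.map (fun q => q.2.dim)).count m = 1 := by
                rw [← hpermdims.count_eq]; exact hcount
              have hc0 : (e.map (fun q => q.2.dim)).count m = 0 := by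
                rw [List.count_cons] at hcount2
                simp [hpmdim] at hcount2
                omega
              have hne : p.2.dim ≠ m := by
                intro hcon
                have hmm : m ∈ e.map (fun q => q.2.dim) :=
                  hcon ▸ List.mem_map_of_mem hpe
                rw [← List.count_pos_iff] at hmm
                omega
              exact lt_of_le_of_ne hpdim hne
            have hm1 : 1 ≤ m := by omega
            have hlen2 : (l₂' ++ [q]).length = l₂'.length + 1 := by simp
            have hA : (i - 1) * p.2.dim ≤ (i - 1) * (m - 1) :=
              Nat.mul_le_mul_left _ (by omega)
            have hC : (i - 1) * (m - 1) + (i - 1) = (i - 1) * m := by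
              rw [← Nat.mul_succ]; congr 1; omega
            rw [hn, hdm, hlen2]
            omega
          · -- two maxima: d = m + 1
            have hdm : d = m + 1 := by rw [hdval, if_neg hcount]
            have hlen2 : (l₂' ++ [q]).length = l₂'.length + 1 := by simp
            have hA : (i - 1) * p.2.dim ≤ (i - 1) * m := Nat.mul_le_mul_left _ hpdim
            have hC : (i - 1) * m + (i - 1) = (i - 1) * (m + 1) := (Nat.mul_succ _ _).symm
            rw [hn, hdm, hlen2]
            omega
      -- initial step
      have hGn : G.length ≤ n := by rw [hn]; omega
      have hstep : Step Q (r.1 :: G) (l'.map Prod.fst ++ G) := by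
        have hB' : r.2.Perm (l'.map Prod.fst) := by
          rw [← hmapfst]; exact hperm.map _
        exact Step.mk (Q := Q) r.1 G r.2 (l'.map Prod.fst) hrQ hB'
      have hstart : Reach (Step Q) n (r.1 :: G) (l'.map Prod.fst ++ G) := by
        refine Reach.single hstep (by simp [hn]) ?_
        obtain ⟨p0, lr, hlr⟩ : ∃ p0 lr, l' = p0 :: lr := by
          cases hl' : l' with
          | nil =>
            exfalso
            have := hl'len
            rw [hl'] at this
            simp [hllen] at this
            exact hts (List.length_eq_zero_iff.1 this.symm)
          | cons p0 lr => exact ⟨p0, lr, rfl⟩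
        have := hbnd [] p0 lr (by rw [hlr]; rfl)
        simp [hlr]
        omega
      have hrun' : ∀ p ∈ l', ∀ G' : List (GAtom P A),
          Reach (Step Q) ((i - 1) * p.2.dim + 1 + G'.length) (p.1 :: G') G' :=
        fun p hp => hrun p (hperm.mem_iff.2 hp)
      exact hstart.trans (seq_run Q i l' G n hrun' hbnd hGn)

/-- Let `Q` be a ground Horn program in which every rule has at most `i` body atoms,
where `i ≥ 1`. If an atom `h` has a derivation tree in `Q` of dimension at most `k`,
then there is a sequence of steps of the goal-stack machine for `Q` from the state
`[h]` to the empty state `[]` in which every intermediate state has length at most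
`(i − 1)·k + 1`. -/
theorem goal_stack_bounded {P A : Type} (Q : Set (GRule P A)) (i : ℕ) (hi : 1 ≤ i)
    (hQ : ∀ r ∈ Q, r.2.length ≤ i) (h : GAtom P A) (k : ℕ)
    (hT : ∃ T : LTree (GRule P A), IsDeriv Q h T ∧ T.dim ≤ k) :
    ∃ L : List (List (GAtom P A)),
      L.Chain' (Step Q) ∧ L.head? = some [h] ∧ L.getLast? = some [] ∧
      ∀ s ∈ L, s.length ≤ (i - 1) * k + 1 := by
  obtain ⟨T, hder, hdim⟩ := hT
  have := main_run Q i hQ (sizeOf T) T le_rfl h hder []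
  have hmono : (i - 1) * T.dim + 1 + ([] : List (GAtom P A)).length ≤ (i - 1) * k + 1 := by
    simp
    exact Nat.mul_le_mul_left _ hdim
  obtain ⟨L, hc, hh, hl, hb⟩ := this.mono hmono
  exact ⟨L, hc, hh, hl, hb⟩
end
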